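/- Let a > 0 and b, c real. The function ψ(x) = x·exp(-(√a/6)x⁶ - (b/(8√a))x⁴ + ((b²-4ac)/(16a^{3/2}))x²) satisfies -ψ''(x) + (ax¹⁰ + bx⁸ + cx⁶ + dx⁴ + ex²)ψ(x) = E₁ψ(x) for all real x, where E₁ = 3(4ac - b²)/(8a^{3/2}), d = -(56a^{5/2} + b³ - 4abc)/(8a²), and e = -(160a^{5/2}b - b⁴ + 8ab²c - 16a²c²)/(64a³). -/

import Mathlib

private lemma decaux (s b c : ℝ) (hs0 : 0 < s) (x : ℝ) :
    -(deriv (deriv (fun x : ℝ => x * Real.exp (-(s / 6) * x ^ 6 - (b / (8 * s)) * x ^ 4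
        + ((b ^ 2 - 4 * s ^ 2 * c) / (16 * s ^ 3)) * x ^ 2))) x)
      + (s ^ 2 * x ^ 10 + b * x ^ 8 + c * x ^ 6
        + (-(56 * s ^ 5 + b ^ 3 - 4 * s ^ 2 * b * c) / (8 * (s ^ 2) ^ 2)) * x ^ 4
        + (-(160 * s ^ 5 * b - b ^ 4 + 8 * s ^ 2 * b ^ 2 * c - 16 * (s ^ 2) ^ 2 * c ^ 2)
            / (64 * (s ^ 2) ^ 3)) * x ^ 2)
        * (x * Real.exp (-(s / 6) * x ^ 6 - (b / (8 * s)) * x ^ 4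
        + ((b ^ 2 - 4 * s ^ 2 * c) / (16 * s ^ 3)) * x ^ 2))
      = (3 * (4 * s ^ 2 * c - b ^ 2) / (8 * s ^ 3))
        * (x * Real.exp (-(s / 6) * x ^ 6 - (b / (8 * s)) * x ^ 4
        + ((b ^ 2 - 4 * s ^ 2 * c) / (16 * s ^ 3)) * x ^ 2)) := by
  have hsne : s ≠ 0 := ne_of_gt hs0
  set P : ℝ → ℝ := fun x => -(s / 6) * x ^ 6 - (b / (8 * s)) * x ^ 4
      + ((b ^ 2 - 4 * s ^ 2 * c) / (16 * s ^ 3)) * x ^ 2 with hPdef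
  set P' : ℝ → ℝ := fun x => -s * x ^ 5 - (b / (2 * s)) * x ^ 3
      + ((b ^ 2 - 4 * s ^ 2 * c) / (8 * s ^ 3)) * x with hP'def
  set P'' : ℝ → ℝ := fun x => -(5 * s) * x ^ 4 - (3 * b / (2 * s)) * x ^ 2
      + (b ^ 2 - 4 * s ^ 2 * c) / (8 * s ^ 3) with hP''def
  have hP : ∀ x : ℝ, HasDerivAt P (P' x) x := by
    intro x
    have h := (((hasDerivAt_pow 6 x).const_mul (-(s / 6))).sub
        ((hasDerivAt_pow 4 x).const_mul (b / (8 * s)))).add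
        ((hasDerivAt_pow 2 x).const_mul ((b ^ 2 - 4 * s ^ 2 * c) / (16 * s ^ 3)))
    refine h.congr_deriv ?_
    try simp only [hP'def, hP''def]
    push_cast
    field_simp
    ring
  have hP' : ∀ x : ℝ, HasDerivAt P' (P'' x) x := by
    intro x
    have h := (((hasDerivAt_pow 5 x).const_mul (-s)).sub
        ((hasDerivAt_pow 3 x).const_mul (b / (2 * s)))).add
        ((hasDerivAt_id' x).const_mul ((b ^ 2 - 4 * s ^ 2 * c) / (8 * s ^ 3)))
    refine h.congr_deriv ?_
    try simp only [hP''def]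
    push_cast
    field_simp
  have hψ1 : ∀ x : ℝ, HasDerivAt (fun x => x * Real.exp (P x))
      ((1 + x * P' x) * Real.exp (P x)) x := by
    intro x
    have h := (hasDerivAt_id x).mul ((hP x).exp)
    refine h.congr_deriv ?_
    simp only [id_eq]
    ring
  have hd1 : deriv (fun x => x * Real.exp (P x))
      = fun x => (1 + x * P' x) * Real.exp (P x) := by
    funext y; exact (hψ1 y).deriv
  have hψ2 : HasDerivAt (fun x => (1 + x * P' x) * Real.exp (P x))
      ((P' x + x * P'' x + (1 + x * P' x) * P' x) * Real.exp (P x)) x := by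
    have h := (((hasDerivAt_id x).mul (hP' x)).const_add 1).mul ((hP x).exp)
    refine h.congr_deriv ?_
    simp only [id_eq, Pi.mul_apply]
    ring
  have h2 : deriv (deriv (fun x => x * Real.exp (P x))) x
      = (P' x + x * P'' x + (1 + x * P' x) * P' x) * Real.exp (P x) := by
    rw [hd1]; exact hψ2.deriv
  rw [h2]
  set ex := Real.exp (P x) with hexdef
  rw [hP'def, hP''def]
  simp only
  field_simp
  ring

theorem decatic_first_excited_state
    (a b c E₁ d e : ℝ) (ha : 0 < a)
    (hE : E₁ = 3 * (4 * a * c - b ^ 2) / (8 * (Real.sqrt a) ^ 3))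
    (hd : d = -(56 * (Real.sqrt a) ^ 5 + b ^ 3 - 4 * a * b * c) / (8 * a ^ 2))
    (he : e = -(160 * (Real.sqrt a) ^ 5 * b - b ^ 4 + 8 * a * b ^ 2 * c - 16 * a ^ 2 * c ^ 2)
          / (64 * a ^ 3))
    (ψ : ℝ → ℝ)
    (hψ : ψ = fun x => x * Real.exp (-(Real.sqrt a / 6) * x ^ 6 - (b / (8 * Real.sqrt a)) * x ^ 4
          + ((b ^ 2 - 4 * a * c) / (16 * (Real.sqrt a) ^ 3)) * x ^ 2)) :
    ∀ x : ℝ, -(deriv (deriv ψ) x)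
      + (a * x ^ 10 + b * x ^ 8 + c * x ^ 6 + d * x ^ 4 + e * x ^ 2) * ψ x
      = E₁ * ψ x := by
  subst hE hd he hψ
  intro x
  obtain ⟨s, hs0, rfl⟩ : ∃ s : ℝ, 0 < s ∧ s ^ 2 = a :=
    ⟨Real.sqrt a, Real.sqrt_pos.mpr ha, Real.sq_sqrt ha.le⟩
  rw [Real.sqrt_sq hs0.le]
  exact decaux s b c hs0 x
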